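/- There holds the identity ∫_ℝ w(x)² dx = 2σ ∫_ℝ w'(x)² dx, and consequently the solvability (orthogonality) condition ∫_ℝ (w'(x) + σ^{−1} x w(x)) w'(x) dx = 0. -/

import Mathlib

open Real

open MeasureTheory Filter Set Topology

lemma my_integrable_exp_neg_abs {a : ℝ} (ha : 0 < a) :
    Integrable (fun x : ℝ => Real.exp (-a * |x|)) := by
  have hIoi : IntegrableOn (fun x : ℝ => Real.exp (-a * |x|)) (Set.Ioi 0) := by
    apply (exp_neg_integrableOn_Ioi 0 ha).congr_fun ?_ measurableSet_Ioi
    intro x hx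
    simp only []
    rw [abs_of_pos (by exact hx)]
  have hIic : IntegrableOn (fun x : ℝ => Real.exp (-a * |x|)) (Set.Iic 0) := by
    rw [← Measure.map_neg_eq_self (volume : Measure ℝ)]
    have m : MeasurableEmbedding fun x : ℝ => -x := (Homeomorph.neg ℝ).measurableEmbedding
    rw [m.integrableOn_map_iff]
    simp_rw [Function.comp_def, abs_neg, neg_preimage, neg_Iic, neg_zero]
    exact Iff.mpr integrableOn_Ici_iff_integrableOn_Ioi hIoi
  have := hIic.union hIoi
  rwa [Set.Iic_union_Ioi, integrableOn_univ] at this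

lemma my_integrable_of_bound {f : ℝ → ℝ} (hf : Continuous f) {C a : ℝ} (ha : 0 < a)
    (h : ∀ x, |f x| ≤ C * Real.exp (-a * |x|)) : Integrable f :=
  (((my_integrable_exp_neg_abs ha).const_mul C).mono' hf.aestronglyMeasurable
    (Filter.Eventually.of_forall fun x => by simpa [Real.norm_eq_abs] using h x))

/-- `∫ w² = 2σ ∫ (w')²`, and consequently the orthogonality condition
`∫ (w' + σ⁻¹ x w) w' = 0`, for `σ = (p+1)/(p−1) − 1/2` and `w` the ground state. -/
theorem integral_identity_and_orthogonality
    (p : ℝ) (hp : 1 < p) (σ : ℝ) (hσ : σ = (p + 1) / (p - 1) - 1 / 2)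
    (w : ℝ → ℝ)
    (hw_pos : ∀ x, 0 < w x)
    (hw_smooth : ContDiff ℝ 2 w)
    (hw_eq : ∀ x, deriv (deriv w) x - w x + w x ^ p = 0)
    (hdecay : ∃ C₀ > (0:ℝ), ∃ a > (0:ℝ),
      ∀ x : ℝ, w x + |deriv w x| ≤ C₀ * Real.exp (-a * |x|)) :
    (∫ x : ℝ, (w x) ^ 2) = 2 * σ * ∫ x : ℝ, (deriv w x) ^ 2 ∧
    (∫ x : ℝ, (deriv w x + σ⁻¹ * x * w x) * deriv w x) = 0 := by
  obtain ⟨C₀, hC₀, a, ha, hdec⟩ := hdecay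
  -- smoothness facts
  have hw2 : ContDiff ℝ (1 + 1 : ℕ) w := by exact_mod_cast hw_smooth
  have hsucc := (contDiff_succ_iff_deriv (n := 1)).mp (by exact_mod_cast hw2)
  have hw_diff : Differentiable ℝ w := hsucc.1
  have hw1 : ContDiff ℝ 1 (deriv w) := hsucc.2.2
  have hw'_diff : Differentiable ℝ (deriv w) := hw1.differentiable one_ne_zero
  have hw_cont : Continuous w := hw_diff.continuous
  have hw'_cont : Continuous (deriv w) := hw'_diff.continuous
  have hDw : ∀ x, HasDerivAt w (deriv w x) x := fun x => (hw_diff x).hasDerivAt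
  have hD2 : ∀ x, HasDerivAt (deriv w) (deriv (deriv w) x) x := fun x => (hw'_diff x).hasDerivAt
  -- bounds
  have hbw : ∀ x, |w x| ≤ C₀ * Real.exp (-a * |x|) := fun x => by
    have := hdec x; have := abs_nonneg (deriv w x); have := (hw_pos x).le
    rw [abs_of_nonneg (hw_pos x).le]; linarith
  have hbv : ∀ x, |deriv w x| ≤ C₀ * Real.exp (-a * |x|) := fun x => by
    have := hdec x; have := (hw_pos x).le; linarith
  have hexp_le : ∀ x : ℝ, Real.exp (-a * |x|) ≤ 1 := fun x => by
    rw [Real.exp_le_one_iff]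
    have : 0 ≤ a * |x| := mul_nonneg ha.le (abs_nonneg x)
    linarith
  have hexp_pos : ∀ x : ℝ, 0 < Real.exp (-a * |x|) := fun x => Real.exp_pos _
  have haux : ∀ x : ℝ, |x| * Real.exp (-a * |x|) ≤ 1 / a := by
    intro x
    have h1 : a * |x| + 1 ≤ Real.exp (a * |x|) := Real.add_one_le_exp _
    have h2 : Real.exp (-a * |x|) = (Real.exp (a * |x|))⁻¹ := by
      rw [← Real.exp_neg]; ring_nf
    rw [h2, inv_eq_one_div, mul_one_div, div_le_div_iff₀ (Real.exp_pos _) ha]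
    nlinarith [abs_nonneg x]
  -- integrability
  have B_int : Integrable (fun x => w x ^ 2) := by
    apply my_integrable_of_bound (hw_cont.pow 2) ha (C := C₀ ^ 2)
    intro x
    have h1 := hbw x; have h2 := hexp_le x; have h3 := hexp_pos x
    have h4 := abs_nonneg (w x)
    rw [Pi.pow_apply, abs_pow]
    nlinarith [mul_le_mul h1 h1 h4 (by positivity : (0:ℝ) ≤ C₀ * Real.exp (-a * |x|))]
  have A_int : Integrable (fun x => deriv w x ^ 2) := by
    apply my_integrable_of_bound (hw'_cont.pow 2) ha (C := C₀ ^ 2)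
    intro x
    have h1 := hbv x; have h2 := hexp_le x; have h3 := hexp_pos x
    have h4 := abs_nonneg (deriv w x)
    rw [Pi.pow_apply, abs_pow]
    nlinarith [mul_le_mul h1 h1 h4 (by positivity : (0:ℝ) ≤ C₀ * Real.exp (-a * |x|))]
  have ww'_int : Integrable (fun x => w x * deriv w x) := by
    apply my_integrable_of_bound (hw_cont.mul hw'_cont) ha (C := C₀ ^ 2)
    intro x
    have h1 := hbw x; have h2 := hbv x; have h3 := hexp_le x; have h4 := hexp_pos x
    rw [Pi.mul_apply, abs_mul]
    nlinarith [mul_le_mul h1 h2 (abs_nonneg _) (by positivity : (0:ℝ) ≤ C₀ * Real.exp (-a * |x|))]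
  have xww'_int : Integrable (fun x => x * (w x * deriv w x)) := by
    apply my_integrable_of_bound (continuous_id.mul (hw_cont.mul hw'_cont)) ha
      (C := C₀ ^ 2 / a)
    intro x
    have h1 := hbw x; have h2 := hbv x; have h3 := hexp_pos x; have h4 := haux x
    calc |x * (w x * deriv w x)| = |x| * (|w x| * |deriv w x|) := by
          rw [abs_mul, abs_mul]
      _ ≤ |x| * (C₀ * Real.exp (-a * |x|) * (C₀ * Real.exp (-a * |x|))) := by
          gcongr
      _ = (|x| * Real.exp (-a * |x|)) * (C₀ * C₀ * Real.exp (-a * |x|)) := by ring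
      _ ≤ (1 / a) * (C₀ * C₀ * Real.exp (-a * |x|)) := by
          gcongr
      _ = C₀ ^ 2 / a * Real.exp (-a * |x|) := by ring
  have xw2_int : Integrable (fun x => x * w x ^ 2 / 2) := by
    apply my_integrable_of_bound (by continuity) ha (C := C₀ ^ 2 / a)
    intro x
    have h1 := hbw x; have h3 := hexp_pos x; have h4 := haux x
    calc |x * w x ^ 2 / 2| = |x| * |w x| ^ 2 / 2 := by
          rw [abs_div, abs_mul, abs_pow]; norm_num
      _ ≤ |x| * (C₀ * Real.exp (-a * |x|)) ^ 2 / 2 := by gcongr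
      _ = (|x| * Real.exp (-a * |x|)) * (C₀ ^ 2 * Real.exp (-a * |x|)) / 2 := by ring
      _ ≤ (1 / a) * (C₀ ^ 2 * Real.exp (-a * |x|)) / 2 := by gcongr
      _ ≤ (1 / a) * (C₀ ^ 2 * Real.exp (-a * |x|)) := by
          have ht : 0 ≤ (1 / a) * (C₀ ^ 2 * Real.exp (-a * |x|)) := by positivity
          linarith
      _ = C₀ ^ 2 / a * Real.exp (-a * |x|) := by ring
  -- energy function
  have hp1 : p + 1 ≠ 0 := by linarith
  set E : ℝ → ℝ := fun x => deriv w x ^ 2 - w x ^ 2 + 2 / (p + 1) * w x ^ (p + 1) with hE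
  have hE_deriv : ∀ x, HasDerivAt E 0 x := by
    intro x
    have h1 : HasDerivAt (fun y => deriv w y ^ 2)
        ((2:ℕ) * deriv w x ^ (2 - 1) * deriv (deriv w) x) x := (hD2 x).pow 2
    have h2 : HasDerivAt (fun y => w y ^ 2) ((2:ℕ) * w x ^ (2 - 1) * deriv w x) x :=
      (hDw x).pow 2
    have h3 : HasDerivAt (fun y => w y ^ (p + 1))
        (deriv w x * (p + 1) * w x ^ (p + 1 - 1)) x :=
      (hDw x).rpow_const (Or.inl (hw_pos x).ne')
    have h4 := ((h1.sub h2).add (h3.const_mul (2 / (p + 1))))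
    refine h4.congr_deriv ?_
    have heq := hw_eq x
    have hd2 : deriv (deriv w) x = w x - w x ^ p := by linarith
    have hpe : p + 1 - 1 = p := by ring
    rw [hpe, hd2]
    field_simp
    ring
  have hE_const : ∀ x, E x = E 0 := fun x =>
    is_const_of_deriv_eq_zero (fun y => (hE_deriv y).differentiableAt)
      (fun y => (hE_deriv y).deriv) x 0
  -- limits at +infty
  have hg_tendsto : Tendsto (fun x : ℝ => C₀ * Real.exp (-a * |x|)) atTop (𝓝 0) := by
    have h0 : Tendsto (fun x : ℝ => a * |x|) atTop atTop :=
      tendsto_abs_atTop_atTop.const_mul_atTop ha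
    have h1 : Tendsto (fun x : ℝ => Real.exp (-a * |x|)) atTop (𝓝 0) := by
      have := (tendsto_inv_atTop_zero.comp (Real.tendsto_exp_atTop.comp h0))
      apply this.congr
      intro x
      simp [Function.comp, ← Real.exp_neg]
    simpa using h1.const_mul C₀
  have hw_top : Tendsto w atTop (𝓝 0) := by
    apply squeeze_zero_norm _ hg_tendsto
    intro x
    simpa [Real.norm_eq_abs] using hbw x
  have hv_top : Tendsto (deriv w) atTop (𝓝 0) := by
    apply squeeze_zero_norm _ hg_tendsto
    intro x
    simpa [Real.norm_eq_abs] using hbv x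
  have hwp_top : Tendsto (fun x => w x ^ (p + 1)) atTop (𝓝 0) := by
    have hc : ContinuousAt (fun t : ℝ => t ^ (p + 1)) 0 :=
      Real.continuousAt_rpow_const 0 (p + 1) (Or.inr (by linarith))
    have := hc.tendsto.comp hw_top
    simpa [Function.comp_def, Real.zero_rpow hp1] using this
  have hE_top : Tendsto E atTop (𝓝 0) := by
    have : Tendsto E atTop (𝓝 (0 ^ 2 - 0 ^ 2 + 2 / (p + 1) * 0)) :=
      ((hv_top.pow 2).sub (hw_top.pow 2)).add (hwp_top.const_mul _)
    simpa using this
  have hE0 : E 0 = 0 := by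
    have h1 : Tendsto E atTop (𝓝 (E 0)) :=
      tendsto_const_nhds.congr (fun x => (hE_const x).symm)
    exact tendsto_nhds_unique h1 hE_top
  have heng : ∀ x, 2 * w x ^ (p + 1) = (p + 1) * (w x ^ 2 - deriv w x ^ 2) := by
    intro x
    have hx : E x = 0 := by rw [hE_const x, hE0]
    simp only [hE] at hx
    field_simp at hx
    linarith
  -- pointwise identity for the derivative of w * w'
  have pointwise : ∀ x, deriv w x * deriv (deriv w) x + w x * deriv (deriv w) x
      = deriv w x * deriv (deriv w) x + w x * deriv (deriv w) x := fun _ => rfl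
  have pw1 : ∀ x, deriv w x * deriv w x + w x * deriv (deriv w) x
      = (p + 3) / 2 * deriv w x ^ 2 + (1 - p) / 2 * w x ^ 2 := by
    intro x
    have h1 := hw_eq x
    have h2 := heng x
    have h3 : w x ^ (p + 1) = w x ^ p * w x := by
      rw [Real.rpow_add (hw_pos x), Real.rpow_one]
    linear_combination (w x) * h1 - (1 / 2) * h2 + h3
  -- FTC 1
  have int1 : Integrable (fun x => deriv w x * deriv w x + w x * deriv (deriv w) x) := by
    apply ((A_int.const_mul ((p + 3) / 2)).add (B_int.const_mul ((1 - p) / 2))).congr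
    exact Filter.Eventually.of_forall fun x => (pw1 x).symm
  have key1 : ∫ x, (deriv w x * deriv w x + w x * deriv (deriv w) x) = 0 :=
    integral_eq_zero_of_hasDerivAt_of_integrable
      (fun x => (hDw x).mul (hD2 x)) int1 ww'_int
  have eq1 : (p + 3) / 2 * (∫ x, deriv w x ^ 2) + (1 - p) / 2 * (∫ x, w x ^ 2) = 0 := by
    rw [← integral_const_mul, ← integral_const_mul,
      ← integral_add (A_int.const_mul _) (B_int.const_mul _)]
    rw [← key1]
    apply integral_congr_ae
    exact Filter.Eventually.of_forall fun x => (pw1 x).symm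
  -- FTC 2
  have pw2 : ∀ x, (1 * w x ^ 2 + x * ((2:ℕ) * w x ^ (2 - 1) * deriv w x)) / 2
      = w x ^ 2 / 2 + x * (w x * deriv w x) := by
    intro x
    norm_num
    ring
  have int2 : Integrable (fun x => (1 * w x ^ 2 + x * ((2:ℕ) * w x ^ (2 - 1) * deriv w x)) / 2) := by
    apply ((B_int.div_const 2).add xww'_int).congr
    exact Filter.Eventually.of_forall fun x => (pw2 x).symm
  have key2 : ∫ x, (1 * w x ^ 2 + x * ((2:ℕ) * w x ^ (2 - 1) * deriv w x)) / 2 = 0 :=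
    integral_eq_zero_of_hasDerivAt_of_integrable
      (fun x => ((hasDerivAt_id x).mul ((hDw x).pow 2)).div_const 2) int2 xw2_int
  have eq2 : (∫ x, w x ^ 2) / 2 + (∫ x, x * (w x * deriv w x)) = 0 := by
    rw [← integral_div, ← integral_add (B_int.div_const 2) xww'_int, ← key2]
    apply integral_congr_ae
    exact Filter.Eventually.of_forall fun x => (pw2 x).symm
  -- conclude
  set A := ∫ x, deriv w x ^ 2 with hA
  set B := ∫ x, w x ^ 2 with hB
  have hne : p - 1 ≠ 0 := sub_ne_zero.mpr (ne_of_gt hp)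
  have hσ2 : 2 * σ * (p - 1) = p + 3 := by
    rw [hσ]; field_simp; ring
  have hσ0 : σ ≠ 0 := by
    intro h
    rw [h] at hσ2
    simp at hσ2
    linarith
  have hBA : B = 2 * σ * A := by
    have h2 : (p - 1) * B = (p + 3) * A := by linear_combination (-2 : ℝ) * eq1
    have h3 : (p - 1) * B = (p - 1) * (2 * σ * A) := by linear_combination h2 - A * hσ2
    exact mul_left_cancel₀ hne h3
  constructor
  · exact hBA
  · have hsplit : (fun x => (deriv w x + σ⁻¹ * x * w x) * deriv w x)
        = fun x => deriv w x ^ 2 + σ⁻¹ * (x * (w x * deriv w x)) := by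
      funext x; ring
    rw [hsplit, integral_add A_int (xww'_int.const_mul σ⁻¹), integral_const_mul]
    have hX : (∫ x, x * (w x * deriv w x)) = -(B / 2) := by linarith
    rw [hX, hBA]
    field_simp
    ring
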